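/- Let L = {gP_i : g ∈ A(B_n), 1 ≤ i ≤ n} ∪ {0} and define the relation ≤ on L by: 0 ≤ x for every x ∈ L, and g_1P_{k_1} ≤ g_2P_{k_2} iff k_1 ≤ k_2 and g_1P_{k_1} ∩ g_2P_{k_2} ≠ ∅. Then ≤ is a partial order on L (reflexive, antisymmetric and transitive). -/

import Mathlib

/-- The defining relations of the Artin group of type `Bₙ` on generators
`s₁, …, sₙ` (indexed here by `Fin n`, 0-based): commutation for distant generators,
braid relations `s_i s_{i+1} s_i = s_{i+1} s_i s_{i+1}` for `1 ≤ i ≤ n-2`, and the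
relation `s_{n-1} s_n s_{n-1} s_n = s_n s_{n-1} s_n s_{n-1}`. -/
def artinBRels (n : ℕ) : Set (FreeGroup (Fin n)) :=
  {r | (∃ i j : Fin n, (i : ℕ) + 2 ≤ (j : ℕ) ∧
          r = FreeGroup.of i * FreeGroup.of j * (FreeGroup.of i)⁻¹ * (FreeGroup.of j)⁻¹) ∨
       (∃ i j : Fin n, (i : ℕ) + 1 = (j : ℕ) ∧ (j : ℕ) + 1 < n ∧
          r = FreeGroup.of i * FreeGroup.of j * FreeGroup.of i *
              (FreeGroup.of j * FreeGroup.of i * FreeGroup.of j)⁻¹) ∨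
       (∃ i j : Fin n, (i : ℕ) + 1 = (j : ℕ) ∧ (j : ℕ) + 1 = n ∧
          r = FreeGroup.of i * FreeGroup.of j * FreeGroup.of i * FreeGroup.of j *
              (FreeGroup.of j * FreeGroup.of i * FreeGroup.of j * FreeGroup.of i)⁻¹)}

/-- The Artin group of spherical type `Bₙ`. -/
abbrev ArtinB (n : ℕ) : Type := PresentedGroup (artinBRels n)

/-- The maximal standard parabolic subgroup `P_i` of `A(Bₙ)` generated by all standard
generators except `s_i` (here `i : Fin n` is 0-based). -/
def ArtinBP (n : ℕ) (i : Fin n) : Subgroup (ArtinB n) :=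
  Subgroup.closure {x : ArtinB n | ∃ j : Fin n, j ≠ i ∧ x = PresentedGroup.of j}

/-- The left coset `g P_i`, regarded as a subset of `A(Bₙ)`. -/
def cosetSet {n : ℕ} (g : ArtinB n) (i : Fin n) : Set (ArtinB n) :=
  {x : ArtinB n | ∃ p ∈ ArtinBP n i, x = g * p}

/-- The carrier `L = {g P_i : g ∈ A(Bₙ), 1 ≤ i ≤ n} ∪ {0}`; `none` is the element `0`. -/
abbrev BLCarrier (n : ℕ) : Type :=
  Option {S : Set (ArtinB n) // ∃ (g : ArtinB n) (i : Fin n), S = cosetSet g i}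

/-- The relation on `L`: `0 ≤ x` for all `x`, and `g₁ P_{k₁} ≤ g₂ P_{k₂}` iff
`k₁ ≤ k₂` and `g₁ P_{k₁} ∩ g₂ P_{k₂} ≠ ∅`. -/
def BLle {n : ℕ} : BLCarrier n → BLCarrier n → Prop
  | none, _ => True
  | some _, none => False
  | some S, some T =>
      ∃ (g₁ : ArtinB n) (i₁ : Fin n) (g₂ : ArtinB n) (i₂ : Fin n),
        S.1 = cosetSet g₁ i₁ ∧ T.1 = cosetSet g₂ i₂ ∧
        (i₁ : ℕ) ≤ (i₂ : ℕ) ∧ (S.1 ∩ T.1).Nonempty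

namespace ABAux

open Equiv

set_option maxHeartbeats 1000000 in
lemma swap_swap_comm (a b : ℕ) (h : a+2 ≤ b) :
    (swap a (a+1)) * swap b (b+1) = swap b (b+1) * swap a (a+1) := by
  ext x; simp only [Equiv.Perm.mul_apply, Equiv.swap_apply_def]; split_ifs <;> omega

set_option maxHeartbeats 1000000 in
lemma swap_braid (a : ℕ) :
    swap a (a+1) * swap (a+1) (a+2) * swap a (a+1)
      = swap (a+1) (a+2) * swap a (a+1) * swap (a+1) (a+2) := by
  ext x; simp only [Equiv.Perm.mul_apply, Equiv.swap_apply_def]; split_ifs <;> omega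

variable {n : ℕ}

lemma relator_eq_one {r : FreeGroup (Fin n)} (hr : r ∈ artinBRels n) :
    (QuotientGroup.mk r : ArtinB n) = 1 :=
  (QuotientGroup.eq_one_iff r).mpr (Subgroup.subset_normalClosure hr)

lemma of_eq_mk (i : Fin n) :
    (PresentedGroup.of i : ArtinB n) = QuotientGroup.mk (FreeGroup.of i) := rfl

lemma comm_rel {i j : Fin n} (h : (i : ℕ) + 2 ≤ (j : ℕ)) :
    Commute (PresentedGroup.of (rels := artinBRels n) i) (PresentedGroup.of j) := by
  have h1 := relator_eq_one (n := n) (Or.inl ⟨i, j, h, rfl⟩)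
  rw [← commutatorElement_eq_one_iff_commute]
  rw [commutatorElement_def]; exact h1

/-- generator image in `Perm ℕ` -/
def fperm (n : ℕ) (j : Fin n) : Equiv.Perm ℕ :=
  if (j : ℕ) + 1 < n then swap (j : ℕ) ((j : ℕ)+1) else 1

lemma fperm_rels : ∀ r ∈ artinBRels n, FreeGroup.lift (fperm n) r = 1 := by
  rintro r (⟨i, j, hij, rfl⟩ | ⟨i, j, hij, hjn, rfl⟩ | ⟨i, j, hij, hjn, rfl⟩)
  · simp only [map_mul, map_inv, FreeGroup.lift_apply_of]
    rw [show fperm n i * fperm n j = fperm n j * fperm n i by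
      unfold fperm; split_ifs <;> first | exact swap_swap_comm _ _ hij | simp]
    group
  · have hi : (i : ℕ) + 1 < n := by omega
    simp only [map_mul, map_inv, FreeGroup.lift_apply_of]
    rw [show fperm n i = swap (i : ℕ) ((i : ℕ)+1) from if_pos hi,
        show fperm n j = swap ((i : ℕ)+1) ((i : ℕ)+2) by
          unfold fperm; rw [if_pos (by omega : (j : ℕ)+1 < n)]; rw [← hij],
        mul_inv_eq_one]
    exact swap_braid _
  · have hj : fperm n j = 1 := by unfold fperm; rw [if_neg (by omega)]
    simp only [map_mul, map_inv, FreeGroup.lift_apply_of, hj]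
    group

/-- generator image in `Multiplicative ℤ` -/
def fz (n : ℕ) (j : Fin n) : Multiplicative ℤ :=
  if (j : ℕ) + 1 = n then Multiplicative.ofAdd 1 else 1

lemma fz_rels : ∀ r ∈ artinBRels n, FreeGroup.lift (fz n) r = 1 := by
  rintro r (⟨i, j, hij, rfl⟩ | ⟨i, j, hij, hjn, rfl⟩ | ⟨i, j, hij, hjn, rfl⟩)
  · simp only [map_mul, map_inv, FreeGroup.lift_apply_of]
    rw [mul_inv_eq_one, mul_inv_eq_iff_eq_mul, mul_comm (fz n i) (fz n j)]
  · have h1 : fz n i = 1 := by unfold fz; rw [if_neg (by omega)]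
    have h2 : fz n j = 1 := by unfold fz; rw [if_neg (by omega)]
    simp only [map_mul, map_inv, FreeGroup.lift_apply_of, h1, h2]
    group
  · have h1 : fz n i = 1 := by
      unfold fz; rw [if_neg (by have := j.isLt; omega)]
    simp only [map_mul, map_inv, FreeGroup.lift_apply_of, h1]
    group

def permHom (n : ℕ) : ArtinB n →* Equiv.Perm ℕ := PresentedGroup.toGroup fperm_rels

def zHom (n : ℕ) : ArtinB n →* Multiplicative ℤ := PresentedGroup.toGroup fz_rels

@[simp] lemma permHom_of (j : Fin n) : permHom n (PresentedGroup.of j) = fperm n j :=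
  PresentedGroup.toGroup.of _

@[simp] lemma zHom_of (j : Fin n) : zHom n (PresentedGroup.of j) = fz n j :=
  PresentedGroup.toGroup.of _

lemma perm_stab {i : Fin n} (hi : (i : ℕ) + 1 < n) {x : ArtinB n} (hx : x ∈ ArtinBP n i) :
    ∀ k : ℕ, permHom n x k ≤ (i : ℕ) ↔ k ≤ (i : ℕ) := by
  refine Subgroup.closure_induction
    (p := fun x _ => ∀ k : ℕ, permHom n x k ≤ (i : ℕ) ↔ k ≤ (i : ℕ)) ?_ ?_ ?_ ?_ hx
  · rintro x ⟨j, hj, rfl⟩ k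
    have hji : (j : ℕ) ≠ (i : ℕ) := fun h => hj (Fin.ext h)
    rw [permHom_of]; unfold fperm
    split_ifs with h
    · rw [Equiv.swap_apply_def]; split_ifs <;> omega
    · simp
  · intro k; simp
  · intro x y hx hy ihx ihy k
    simp only [map_mul, Equiv.Perm.mul_apply]
    rw [ihx, ihy]
  · intro x hx ih k
    rw [map_inv]
    have h2 := ih ((permHom n x)⁻¹ k)
    rw [show (permHom n x) ((permHom n x)⁻¹ k) = k from Equiv.apply_symm_apply _ _] at h2
    exact h2.symm

theorem of_not_mem_P (i : Fin n) : PresentedGroup.of i ∉ ArtinBP n i := by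
  intro hmem
  rcases lt_or_ge ((i : ℕ) + 1) n with hi | hi
  · have h := perm_stab hi hmem (i : ℕ)
    rw [permHom_of] at h
    unfold fperm at h
    rw [if_pos hi, Equiv.swap_apply_left] at h
    omega
  · have hin : (i : ℕ) + 1 = n := by have := i.isLt; omega
    have hker : ArtinBP n i ≤ (zHom n).ker := by
      rw [ArtinBP]
      refine (Subgroup.closure_le _).mpr ?_
      rintro x ⟨j, hj, rfl⟩
      have : (j : ℕ) + 1 ≠ n := fun h => hj (Fin.ext (by omega))
      simp [MonoidHom.mem_ker, fz, this]
    have h := hker hmem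
    rw [MonoidHom.mem_ker, zHom_of] at h
    unfold fz at h
    rw [if_pos hin] at h
    simpa using h

/-! coset basics -/

lemma mem_cosetSet {g x : ArtinB n} {i : Fin n} :
    x ∈ cosetSet g i ↔ g⁻¹ * x ∈ ArtinBP n i := by
  constructor
  · rintro ⟨p, hp, rfl⟩; simpa using hp
  · intro h; exact ⟨g⁻¹ * x, h, by group⟩

lemma self_mem_cosetSet (g : ArtinB n) (i : Fin n) : g ∈ cosetSet g i :=
  mem_cosetSet.mpr (by simpa using (ArtinBP n i).one_mem)

lemma cosetSet_eq_of_mem {g x : ArtinB n} {i : Fin n} (h : x ∈ cosetSet g i) :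
    cosetSet g i = cosetSet x i := by
  rw [mem_cosetSet] at h
  ext y
  rw [mem_cosetSet, mem_cosetSet]
  constructor
  · intro hy
    have : x⁻¹ * y = (g⁻¹ * x)⁻¹ * (g⁻¹ * y) := by group
    rw [this]; exact mul_mem (inv_mem h) hy
  · intro hy
    have : g⁻¹ * y = (g⁻¹ * x) * (x⁻¹ * y) := by group
    rw [this]; exact mul_mem h hy

lemma gen_mem_P {i j : Fin n} (h : j ≠ i) : PresentedGroup.of j ∈ ArtinBP n i :=
  Subgroup.subset_closure ⟨j, h, rfl⟩

lemma index_eq {g h : ArtinB n} {i j : Fin n} (he : cosetSet g i = cosetSet h j) : i = j := by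
  by_contra hne
  have hh : h ∈ cosetSet g i := he ▸ self_mem_cosetSet h j
  have h1 : cosetSet h i = cosetSet h j := (cosetSet_eq_of_mem hh).symm.trans he
  have h2 : h * PresentedGroup.of j ∈ cosetSet h i := by
    rw [mem_cosetSet]
    simpa using gen_mem_P (Ne.symm hne)
  rw [h1, mem_cosetSet] at h2
  simp only [inv_mul_cancel_left] at h2
  exact of_not_mem_P j h2

/-! decomposition lemma -/

lemma decomp {i₁ i₂ j₂ : Fin n} (h₁ : (i₁ : ℕ) ≤ (i₂ : ℕ)) (h₂ : (i₂ : ℕ) ≤ (j₂ : ℕ))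
    {q : ArtinB n} (hq : q ∈ ArtinBP n i₂) :
    ∃ a ∈ ArtinBP n i₁, ∃ b ∈ ArtinBP n j₂, q = a * b := by
  set A : Subgroup (ArtinB n) :=
    Subgroup.closure {x : ArtinB n | ∃ k : Fin n, (i₂ : ℕ) < (k : ℕ) ∧ x = PresentedGroup.of k}
    with hA
  set B : Subgroup (ArtinB n) :=
    Subgroup.closure {x : ArtinB n | ∃ k : Fin n, (k : ℕ) < (i₂ : ℕ) ∧ x = PresentedGroup.of k}
    with hB
  have hAP : A ≤ ArtinBP n i₁ := by
    rw [hA]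
    refine (Subgroup.closure_le _).mpr ?_
    rintro x ⟨k, hk, rfl⟩
    exact gen_mem_P (fun h => by rw [h] at hk; omega)
  have hBP : B ≤ ArtinBP n j₂ := by
    rw [hB]
    refine (Subgroup.closure_le _).mpr ?_
    rintro x ⟨k, hk, rfl⟩
    exact gen_mem_P (fun h => by rw [h] at hk; omega)
  have hcomm : ∀ a ∈ A, ∀ b ∈ B, Commute a b := by
    intro a ha
    refine Subgroup.closure_induction
      (p := fun a _ => ∀ b ∈ B, Commute a b) ?_ ?_ ?_ ?_ ha
    · rintro x ⟨k, hk, rfl⟩ b hb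
      refine Subgroup.closure_induction
        (p := fun b _ => Commute (PresentedGroup.of k) b) ?_ ?_ ?_ ?_ hb
      · rintro y ⟨l, hl, rfl⟩
        exact (comm_rel (by omega)).symm
      · exact Commute.one_right _
      · exact fun x y _ _ h1 h2 => h1.mul_right h2
      · exact fun x _ h1 => h1.inv_right
    · exact fun b _ => Commute.one_left _
    · exact fun x y _ _ h1 h2 b hb => (h1 b hb).mul_left (h2 b hb)
    · exact fun x _ h1 b hb => (h1 b hb).inv_left
  have main : ∃ a ∈ A, ∃ b ∈ B, q = a * b := by
    refine Subgroup.closure_induction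
      (p := fun q _ => ∃ a ∈ A, ∃ b ∈ B, q = a * b) ?_ ?_ ?_ ?_ hq
    · rintro x ⟨k, hk, rfl⟩
      rcases lt_or_gt_of_ne (show (k : ℕ) ≠ (i₂ : ℕ) from fun h => hk (Fin.ext h)) with h | h
      · exact ⟨1, A.one_mem, PresentedGroup.of k,
          Subgroup.subset_closure ⟨k, h, rfl⟩, (one_mul _).symm⟩
      · exact ⟨PresentedGroup.of k, Subgroup.subset_closure ⟨k, h, rfl⟩,
          1, B.one_mem, (mul_one _).symm⟩
    · exact ⟨1, A.one_mem, 1, B.one_mem, (one_mul 1).symm⟩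
    · rintro x y _ _ ⟨a, ha, b, hb, rfl⟩ ⟨a', ha', b', hb', rfl⟩
      refine ⟨a * a', mul_mem ha ha', b * b', mul_mem hb hb', ?_⟩
      calc a * b * (a' * b') = a * (b * a') * b' := by group
        _ = a * (a' * b) * b' := by rw [← (hcomm a' ha' b hb).eq]
        _ = a * a' * (b * b') := by group
    · rintro x _ ⟨a, ha, b, hb, rfl⟩
      refine ⟨a⁻¹, inv_mem ha, b⁻¹, inv_mem hb, ?_⟩
      rw [mul_inv_rev, ← ((hcomm a ha b hb).inv_inv).eq]
  obtain ⟨a, ha, b, hb, hab⟩ := main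
  exact ⟨a, hAP ha, b, hBP hb, hab⟩

lemma inter_nonempty {x q : ArtinB n} {i₁ i₂ j₂ : Fin n}
    (h₁ : (i₁ : ℕ) ≤ (i₂ : ℕ)) (h₂ : (i₂ : ℕ) ≤ (j₂ : ℕ)) (hq : q ∈ ArtinBP n i₂) :
    (cosetSet x i₁ ∩ cosetSet (x * q) j₂).Nonempty := by
  obtain ⟨a, ha, b, hb, rfl⟩ := decomp h₁ h₂ hq
  refine ⟨x * a, ⟨a, ha, rfl⟩, ?_⟩
  rw [mem_cosetSet]
  have : (x * (a * b))⁻¹ * (x * a) = b⁻¹ := by group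
  rw [this]
  exact inv_mem hb

end ABAux

/-- The relation `≤` on `L = {g P_i} ∪ {0}` is a partial order. -/
theorem stmt16 (n : ℕ) (hn : 2 ≤ n) :
    (∀ x : BLCarrier n, BLle x x) ∧
    (∀ x y : BLCarrier n, BLle x y → BLle y x → x = y) ∧
    (∀ x y z : BLCarrier n, BLle x y → BLle y z → BLle x z) := by
  refine ⟨?_, ?_, ?_⟩
  · rintro (_ | S)
    · trivial
    · obtain ⟨g, i, hS⟩ := S.2
      exact ⟨g, i, g, i, hS, hS, le_refl _,
        ⟨g, by rw [hS]; exact ⟨ABAux.self_mem_cosetSet g i, ABAux.self_mem_cosetSet g i⟩⟩⟩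
  · rintro (_ | S) (_ | T) hxy hyx
    · rfl
    · exact hyx.elim
    · exact hxy.elim
    · obtain ⟨g₁, i₁, g₂, i₂, hS, hT, hle, w, hwS, hwT⟩ := hxy
      obtain ⟨h₁, j₁, h₂, j₂, hT', hS', hle', _⟩ := hyx
      have e1 : i₂ = j₁ := ABAux.index_eq (hT ▸ hT')
      have e2 : i₁ = j₂ := ABAux.index_eq (hS ▸ hS')
      have e3 : i₁ = i₂ := Fin.ext (by omega)
      have hS2 : S.1 = cosetSet w i₁ := hS.trans (ABAux.cosetSet_eq_of_mem (hS ▸ hwS))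
      have hT2 : T.1 = cosetSet w i₁ := by
        rw [e3]; exact hT.trans (ABAux.cosetSet_eq_of_mem (hT ▸ hwT))
      exact congrArg some (Subtype.ext (hS2.trans hT2.symm))
  · rintro (_ | S) (_ | T) (_ | U) hxy hyz
    · trivial
    · trivial
    · trivial
    · trivial
    · exact hxy.elim
    · exact hxy.elim
    · exact hyz.elim
    · obtain ⟨g₁, i₁, g₂, i₂, hS, hT, hle, u, huS, huT⟩ := hxy
      obtain ⟨h₁, j₁, h₂, j₂, hT', hU, hle', v, hvT, hvU⟩ := hyz
      have e1 : i₂ = j₁ := ABAux.index_eq (hT ▸ hT')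
      have hS2 : S.1 = cosetSet u i₁ := hS.trans (ABAux.cosetSet_eq_of_mem (hS ▸ huS))
      have hT2 : T.1 = cosetSet u i₂ := hT.trans (ABAux.cosetSet_eq_of_mem (hT ▸ huT))
      have hU2 : U.1 = cosetSet v j₂ := hU.trans (ABAux.cosetSet_eq_of_mem (hU ▸ hvU))
      have hvq : u⁻¹ * v ∈ ArtinBP n i₂ := by
        rw [← ABAux.mem_cosetSet, ← hT2]; exact hvT
      have hne : (S.1 ∩ U.1).Nonempty := by
        rw [hS2, hU2]
        have := ABAux.inter_nonempty (x := u) hle (by omega : (i₂ : ℕ) ≤ (j₂ : ℕ)) hvq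
        rwa [mul_inv_cancel_left] at this
      exact ⟨g₁, i₁, h₂, j₂, hS, hU, by omega, hne⟩
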